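/- Fix integers N ≥ 2 and c ≥ 1. Let P be the polynomial ring over ℚ in the variables t_{k,α}, indexed by positive integers k not divisible by N and components α ∈ {1,…,c}. For each positive integer a divisible by N, define the linear operator V_a on P by V_a = Σ_{α=1}^{c} ( Σ_{j ≥ 1, N∤j} (j+a) t_{j+a,α} ∂/∂t_{j,α} + (1/2) Σ_{k+s=a, k,s ≥ 1, N∤k} k·s·t_{k,α} t_{s,α} ), where the quadratic sum acts by multiplication (note N∤k forces N∤s since N | a). Then for all positive integers a, b divisible by N: V_a ∘ V_b − V_b ∘ V_a = (b − a) · V_{a+b} as linear endomorphisms of P. -/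

import Mathlib

open MvPolynomial

/-- Indices of the time variables of the mcGD hierarchy: positive integers
not divisible by `N`. -/
abbrev GDTimeIndex (N : ℕ) : Type := {k : ℕ // 0 < k ∧ ¬ N ∣ k}

/-- Variables `t_{k,α}` of the polynomial ring: a time index together with a
component `α ∈ {1, …, c}`. -/
abbrev GDVar (N c : ℕ) : Type := GDTimeIndex N × Fin c

/-- The Virasoro operator
`V_a = Σ_α ( Σ_{j ≥ 1, N∤j} (j+a) t_{j+a,α} ∂/∂t_{j,α}
        + (1/2) Σ_{k+s=a, k,s ≥ 1, N∤k} k s t_{k,α} t_{s,α} )`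
acting on polynomials in the variables `t_{k,α}` (`k ≥ 1`, `N ∤ k`),
for `a` a positive multiple of `N`. -/
noncomputable def virasoroOpGD (N c : ℕ) (a : ℕ) (ha : N ∣ a)
    (p : MvPolynomial (GDVar N c) ℚ) : MvPolynomial (GDVar N c) ℚ :=
  (∑ᶠ (j : GDTimeIndex N) (α : Fin c),
      ((j.1 + a : ℕ) : ℚ) •
        (X ((⟨j.1 + a,
              Nat.lt_of_lt_of_le j.2.1 (Nat.le_add_right _ _),
              fun hd => j.2.2 (by simpa using Nat.dvd_sub hd ha)⟩ : GDTimeIndex N), α)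
          * pderiv ((j, α) : GDVar N c) p))
  + ((1 / 2 : ℚ) • ∑ᶠ (k : GDTimeIndex N) (s : GDTimeIndex N) (α : Fin c),
      if k.1 + s.1 = a then
        ((k.1 : ℚ) * (s.1 : ℚ)) • (X ((k, α) : GDVar N c) * X ((s, α) : GDVar N c))
      else 0) * p

namespace GDProof

lemma pderiv_pderiv_comm {σ R : Type*} [CommSemiring R] (i j : σ) (p : MvPolynomial σ R) :
    pderiv i (pderiv j p) = pderiv j (pderiv i p) := by
  classical
  have hX : ∀ (k l m : σ), pderiv k (pderiv l (X m : MvPolynomial σ R)) = 0 := by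
    intro k l m
    rcases eq_or_ne m l with rfl | h
    · rw [pderiv_X_self, pderiv_one]
    · rw [pderiv_X_of_ne h, map_zero]
  induction p using MvPolynomial.induction_on with
  | C a => simp
  | add p q hp hq => simp [hp, hq]
  | mul_X p n hp =>
    simp only [pderiv_mul, map_add, hp, hX, mul_zero, add_zero]
    ring

variable {N c : ℕ}

/-- Shift a time index up by a multiple of `N`. -/
def sh (a : ℕ) (ha : N ∣ a) (j : GDTimeIndex N) : GDTimeIndex N :=
  ⟨j.1 + a, Nat.lt_of_lt_of_le j.2.1 (Nat.le_add_right _ _),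
    fun hd => j.2.2 (by simpa using Nat.dvd_sub hd ha)⟩

@[simp] lemma sh_val (a : ℕ) (ha : N ∣ a) (j : GDTimeIndex N) : (sh a ha j).1 = j.1 + a := rfl

lemma sh_injective (a : ℕ) (ha : N ∣ a) : Function.Injective (sh a ha) := by
  intro x y h
  exact Subtype.ext (Nat.add_right_cancel (congrArg Subtype.val h))

/-- Unshift a time index down by a multiple of `N` (identity if out of range). -/
def ush (b : ℕ) (hb : N ∣ b) (j : GDTimeIndex N) : GDTimeIndex N :=
  if h : b < j.1 then
    ⟨j.1 - b, Nat.sub_pos_of_lt h,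
      fun hd => j.2.2 (by
        have := Nat.dvd_add hd hb
        rwa [Nat.sub_add_cancel h.le] at this)⟩
  else j

lemma ush_val {b : ℕ} {hb : N ∣ b} {j : GDTimeIndex N} (h : b < j.1) :
    (ush b hb j).1 = j.1 - b := by
  rw [ush, dif_pos h]

lemma sh_ush {b : ℕ} {hb : N ∣ b} {j : GDTimeIndex N} (h : b < j.1) :
    sh b hb (ush b hb j) = j := by
  refine Subtype.ext ?_
  rw [sh_val, ush_val h, Nat.sub_add_cancel h.le]

lemma ush_sh {b : ℕ} {hb : N ∣ b} {k : GDTimeIndex N} :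
    ush b hb (sh b hb k) = k := by
  refine Subtype.ext ?_
  rw [ush_val (by simpa using k.2.1), sh_val, Nat.add_sub_cancel]

/-- Complement of a time index with respect to `m` (identity if out of range). -/
def cpl (m : ℕ) (hm : N ∣ m) (k : GDTimeIndex N) : GDTimeIndex N :=
  if h : k.1 < m then
    ⟨m - k.1, Nat.sub_pos_of_lt h,
      fun hd => k.2.2 (by
        have := Nat.dvd_sub hm hd
        rwa [Nat.sub_sub_self h.le] at this)⟩
  else k

lemma cpl_val {m : ℕ} {hm : N ∣ m} {k : GDTimeIndex N} (h : k.1 < m) :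
    (cpl m hm k).1 = m - k.1 := by
  rw [cpl, dif_pos h]

lemma cpl_lt {m : ℕ} {hm : N ∣ m} {k : GDTimeIndex N} (h : k.1 < m) :
    (cpl m hm k).1 < m := by
  rw [cpl_val h]
  exact Nat.sub_lt (lt_trans k.2.1 h) k.2.1

lemma cpl_cpl {m : ℕ} {hm : N ∣ m} {k : GDTimeIndex N} (h : k.1 < m) :
    cpl m hm (cpl m hm k) = k := by
  refine Subtype.ext ?_
  rw [cpl_val (cpl_lt h), cpl_val h, Nat.sub_sub_self h.le]

/-- The derivation part of the Virasoro operator, term by term. -/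
noncomputable def DtermV (a : ℕ) (ha : N ∣ a) (p : MvPolynomial (GDVar N c) ℚ)
    (v : GDVar N c) : MvPolynomial (GDVar N c) ℚ :=
  ((v.1.1 + a : ℕ) : ℚ) • (X ((sh a ha v.1, v.2) : GDVar N c) * pderiv v p)

/-- The derivation part of the Virasoro operator. -/
noncomputable def D (a : ℕ) (ha : N ∣ a) (p : MvPolynomial (GDVar N c) ℚ) :
    MvPolynomial (GDVar N c) ℚ :=
  ∑ᶠ (j : GDTimeIndex N), ∑ α : Fin c, DtermV a ha p (j, α)

/-- The quadratic part of the Virasoro operator, term by term. -/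
noncomputable def Qt (a : ℕ) (k s : GDTimeIndex N) : MvPolynomial (GDVar N c) ℚ :=
  ∑ α : Fin c,
    if k.1 + s.1 = a then
      ((k.1 : ℚ) * (s.1 : ℚ)) • (X ((k, α) : GDVar N c) * X ((s, α) : GDVar N c))
    else 0

/-- The quadratic part of the Virasoro operator. -/
noncomputable def Q (a : ℕ) : MvPolynomial (GDVar N c) ℚ :=
  (1 / 2 : ℚ) • ∑ᶠ (k : GDTimeIndex N), ∑ᶠ (s : GDTimeIndex N), Qt a k s

lemma virasoro_eq (a : ℕ) (ha : N ∣ a) (p : MvPolynomial (GDVar N c) ℚ) :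
    virasoroOpGD N c a ha p = D a ha p + (Q a) * p := by
  unfold virasoroOpGD D Q DtermV Qt sh
  congr 1
  · exact finsum_congr fun j => finsum_eq_sum_of_fintype _
  · congr 2
    exact finsum_congr fun k => finsum_congr fun s => finsum_eq_sum_of_fintype _

/-- First-index variables of a polynomial. -/
noncomputable def Fv (p : MvPolynomial (GDVar N c) ℚ) : Finset (GDTimeIndex N) :=
  p.vars.image Prod.fst

lemma pderiv_eq_zero_of_not_Fv {p : MvPolynomial (GDVar N c) ℚ} {j : GDTimeIndex N}
    (hj : j ∉ Fv p) (α : Fin c) : pderiv ((j, α) : GDVar N c) p = 0 := by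
  refine pderiv_eq_zero_of_notMem_vars fun hm => hj ?_
  exact Finset.mem_image_of_mem Prod.fst hm

/-- `D` as a concrete finite sum over any large enough index set. -/
lemma D_eq_sum (a : ℕ) (ha : N ∣ a) (p : MvPolynomial (GDVar N c) ℚ)
    (T : Finset (GDTimeIndex N)) (hT : ∀ v : GDVar N c, v.1 ∉ T → pderiv v p = 0) :
    D a ha p = ∑ v ∈ T ×ˢ (Finset.univ : Finset (Fin c)), DtermV a ha p v := by
  rw [D, Finset.sum_product]
  refine finsum_eq_sum_of_support_subset _ ?_
  intro j hj
  simp only [Function.mem_support, ne_eq] at hj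
  by_contra hjT
  apply hj
  refine Finset.sum_eq_zero fun α _ => ?_
  rw [DtermV, hT (j, α) hjT, mul_zero, smul_zero]

lemma D_eq_sum_Fv (a : ℕ) (ha : N ∣ a) (p : MvPolynomial (GDVar N c) ℚ) :
    D a ha p = ∑ v ∈ Fv p ×ˢ (Finset.univ : Finset (Fin c)), DtermV a ha p v :=
  D_eq_sum a ha p (Fv p) fun v hv => by
    rcases v with ⟨j, α⟩; exact pderiv_eq_zero_of_not_Fv hv α

@[simp] lemma D_zero (a : ℕ) (ha : N ∣ a) : D a ha (0 : MvPolynomial (GDVar N c) ℚ) = 0 := by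
  rw [D_eq_sum a ha 0 ∅ (fun v _ => map_zero _)]
  simp

lemma D_add (a : ℕ) (ha : N ∣ a) (p q : MvPolynomial (GDVar N c) ℚ) :
    D a ha (p + q) = D a ha p + D a ha q := by
  classical
  set T := Fv p ∪ Fv q with hTdef
  have hp : ∀ v : GDVar N c, v.1 ∉ T → pderiv v p = 0 := fun v hv =>
    pderiv_eq_zero_of_not_Fv (fun h => hv (Finset.mem_union_left _ h)) v.2
  have hq : ∀ v : GDVar N c, v.1 ∉ T → pderiv v q = 0 := fun v hv =>
    pderiv_eq_zero_of_not_Fv (fun h => hv (Finset.mem_union_right _ h)) v.2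
  have hpq : ∀ v : GDVar N c, v.1 ∉ T → pderiv v (p + q) = 0 := fun v hv => by
    rw [map_add, hp v hv, hq v hv, add_zero]
  rw [D_eq_sum a ha p T hp, D_eq_sum a ha q T hq, D_eq_sum a ha (p + q) T hpq,
    ← Finset.sum_add_distrib]
  refine Finset.sum_congr rfl fun v _ => ?_
  rcases v with ⟨⟨j, hj⟩, α⟩
  rw [DtermV, DtermV, DtermV, map_add, mul_add, smul_add]

lemma D_smul (a : ℕ) (ha : N ∣ a) (r : ℚ) (p : MvPolynomial (GDVar N c) ℚ) :
    D a ha (r • p) = r • D a ha p := by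
  have hp : ∀ v : GDVar N c, v.1 ∉ Fv p → pderiv v p = 0 := fun v hv =>
    pderiv_eq_zero_of_not_Fv hv v.2
  have hrp : ∀ v : GDVar N c, v.1 ∉ Fv p → pderiv v (r • p) = 0 := fun v hv => by
    rw [Derivation.map_smul, hp v hv, smul_zero]
  rw [D_eq_sum a ha p _ hp, D_eq_sum a ha (r • p) _ hrp, Finset.smul_sum]
  refine Finset.sum_congr rfl fun v _ => ?_
  simp only [DtermV, smul_eq_C_mul, pderiv_C_mul]
  ring

lemma D_sub (a : ℕ) (ha : N ∣ a) (p q : MvPolynomial (GDVar N c) ℚ) :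
    D a ha (p - q) = D a ha p - D a ha q := by
  have := D_add a ha (p - q) q
  rw [sub_add_cancel] at this
  rw [this]; ring

lemma D_mul (a : ℕ) (ha : N ∣ a) (p q : MvPolynomial (GDVar N c) ℚ) :
    D a ha (p * q) = D a ha p * q + p * D a ha q := by
  classical
  set T := Fv p ∪ Fv q with hTdef
  have hp : ∀ v : GDVar N c, v.1 ∉ T → pderiv v p = 0 := fun v hv =>
    pderiv_eq_zero_of_not_Fv (fun h => hv (Finset.mem_union_left _ h)) v.2
  have hq : ∀ v : GDVar N c, v.1 ∉ T → pderiv v q = 0 := fun v hv =>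
    pderiv_eq_zero_of_not_Fv (fun h => hv (Finset.mem_union_right _ h)) v.2
  have hpq : ∀ v : GDVar N c, v.1 ∉ T → pderiv v (p * q) = 0 := fun v hv => by
    rw [pderiv_mul, hp v hv, hq v hv, zero_mul, mul_zero, add_zero]
  rw [D_eq_sum a ha p T hp, D_eq_sum a ha q T hq, D_eq_sum a ha (p * q) T hpq,
    Finset.sum_mul, Finset.mul_sum, ← Finset.sum_add_distrib]
  refine Finset.sum_congr rfl fun v _ => ?_
  rw [DtermV, DtermV, DtermV, pderiv_mul, smul_eq_C_mul, smul_eq_C_mul, smul_eq_C_mul]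
  ring


section DComm

variable (a b : ℕ) (ha : N ∣ a) (hb : N ∣ b) (p : MvPolynomial (GDVar N c) ℚ)

lemma pderiv_D (j : GDTimeIndex N) (α : Fin c) :
    pderiv ((j, α) : GDVar N c) (D b hb p) =
      (if b < j.1 then ((j.1 : ℕ) : ℚ) • pderiv ((ush b hb j, α) : GDVar N c) p else 0)
        + D b hb (pderiv ((j, α) : GDVar N c) p) := by
  classical
  have hT : ∀ w : GDVar N c, w.1 ∉ Fv p → pderiv w (pderiv ((j, α) : GDVar N c) p) = 0 := by
    intro w hw
    rw [pderiv_pderiv_comm, pderiv_eq_zero_of_not_Fv hw, map_zero]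
  rw [D_eq_sum_Fv b hb p, map_sum, D_eq_sum b hb _ (Fv p) hT]
  have hterm : ∀ w : GDVar N c,
      pderiv ((j, α) : GDVar N c) (DtermV b hb p w)
        = ((w.1.1 + b : ℕ) : ℚ) •
            ((if ((sh b hb w.1, w.2) : GDVar N c) = (j, α) then 1 else 0) * pderiv w p)
          + DtermV b hb (pderiv ((j, α) : GDVar N c) p) w := by
    intro w
    rw [DtermV, DtermV, Derivation.map_smul, pderiv_mul, smul_add, pderiv_X, Pi.single_apply,
      pderiv_pderiv_comm]
  rw [Finset.sum_congr rfl fun w _ => hterm w, Finset.sum_add_distrib]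
  congr 1
  by_cases hlt : b < j.1
  · rw [if_pos hlt]
    refine (Finset.sum_eq_single ((ush b hb j, α) : GDVar N c) ?_ ?_).trans ?_
    · intro w _ hne
      rw [if_neg, zero_mul, smul_zero]
      intro hEq
      rw [Prod.ext_iff] at hEq
      obtain ⟨h1, h2⟩ := hEq
      replace h1 : sh b hb w.1 = j := h1
      replace h2 : w.2 = α := h2
      refine hne (Prod.ext_iff.2 ⟨?_, h2⟩)
      show w.1 = ush b hb j
      rw [← h1, ush_sh]
    · intro h
      have hnm : ush b hb j ∉ Fv p := by
        intro hmem
        exact h (Finset.mem_product.2 ⟨hmem, Finset.mem_univ _⟩)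
      rw [pderiv_eq_zero_of_not_Fv hnm, mul_zero, smul_zero]
    · rw [if_pos (by rw [sh_ush hlt]), one_mul]
      have hcoe : (ush b hb j).1 + b = j.1 := by
        rw [ush_val hlt, Nat.sub_add_cancel hlt.le]
      rw [hcoe]
  · rw [if_neg hlt]
    refine Finset.sum_eq_zero fun w _ => ?_
    rw [if_neg, zero_mul, smul_zero]
    intro hEq
    apply hlt
    have h1 : sh b hb w.1 = j := congrArg Prod.fst hEq
    have h2 := congrArg Subtype.val h1
    rw [sh_val] at h2
    have h3 := w.1.2.1
    omega

/-- The large index set used in the commutator computation. -/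
noncomputable def Ubig : Finset (GDTimeIndex N) :=
  Fv p ∪ (Fv p).image (sh a ha) ∪ (Fv p).image (sh b hb)

lemma Fv_subset_Ubig : Fv p ⊆ Ubig a b ha hb p := fun j hj =>
  Finset.mem_union_left _ (Finset.mem_union_left _ hj)

lemma pderiv_D_eq_zero_of_not_Ubig (v : GDVar N c) (hv : v.1 ∉ Ubig a b ha hb p) :
    pderiv v (D b hb p) = 0 := by
  obtain ⟨j, α⟩ := v
  have hjp : j ∉ Fv p := fun h => hv (Fv_subset_Ubig a b ha hb p h)
  have hjb : j ∉ (Fv p).image (sh b hb) := fun h => hv (Finset.mem_union_right _ h)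
  rw [pderiv_D, pderiv_eq_zero_of_not_Fv hjp, D_zero, add_zero]
  split_ifs with hlt
  · rw [pderiv_eq_zero_of_not_Fv, smul_zero]
    intro hmem
    exact hjb (Finset.mem_image.2 ⟨ush b hb j, hmem, sh_ush hlt⟩)
  · rfl

/-- Mixed (second-derivative) term. -/
noncomputable def MixT (v w : GDVar N c) : MvPolynomial (GDVar N c) ℚ :=
  (((v.1.1 + a : ℕ) : ℚ) * ((w.1.1 + b : ℕ) : ℚ)) •
    (X ((sh a ha v.1, v.2) : GDVar N c) *
      (X ((sh b hb w.1, w.2) : GDVar N c) * pderiv w (pderiv v p)))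

/-- Diagonal (single-derivative) term. -/
noncomputable def DiagT (v : GDVar N c) : MvPolynomial (GDVar N c) ℚ :=
  (((v.1.1 + b + a : ℕ) : ℚ) * ((v.1.1 + b : ℕ) : ℚ)) •
    (X ((sh a ha (sh b hb v.1), v.2) : GDVar N c) * pderiv v p)

lemma D_D_eq :
    D a ha (D b hb p)
      = (∑ v ∈ Fv p ×ˢ (Finset.univ : Finset (Fin c)), DiagT a b ha hb p v)
        + ∑ v ∈ Fv p ×ˢ (Finset.univ : Finset (Fin c)),
            ∑ w ∈ Fv p ×ˢ (Finset.univ : Finset (Fin c)), MixT a b ha hb p v w := by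
  classical
  rw [D_eq_sum a ha (D b hb p) (Ubig a b ha hb p)
    (fun v hv => pderiv_D_eq_zero_of_not_Ubig a b ha hb p v hv)]
  have hsplit : ∀ v : GDVar N c,
      DtermV a ha (D b hb p) v
        = (if b < v.1.1 then
            (((v.1.1 + a : ℕ) : ℚ) * ((v.1.1 : ℕ) : ℚ)) •
              (X ((sh a ha v.1, v.2) : GDVar N c) *
                pderiv ((ush b hb v.1, v.2) : GDVar N c) p)
          else 0)
          + ((v.1.1 + a : ℕ) : ℚ) •
              (X ((sh a ha v.1, v.2) : GDVar N c) * D b hb (pderiv v p)) := by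
    intro v
    obtain ⟨j, α⟩ := v
    rw [DtermV, pderiv_D b hb p j α]
    by_cases hlt : b < j.1
    · rw [if_pos hlt, if_pos hlt, mul_add, smul_add]
      simp only [smul_eq_C_mul, map_mul]
      ring
    · rw [if_neg hlt, if_neg hlt, zero_add, zero_add]
  rw [Finset.sum_congr rfl fun v _ => hsplit v, Finset.sum_add_distrib]
  congr 1
  · -- diagonal part
    have hsub : ((Fv p).image (sh b hb)) ⊆ Ubig a b ha hb p := fun j hj =>
      Finset.mem_union_right _ hj
    have hzero : ∀ v ∈ (Ubig a b ha hb p) ×ˢ (Finset.univ : Finset (Fin c)),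
        v ∉ ((Fv p).image (sh b hb)) ×ˢ (Finset.univ : Finset (Fin c)) →
        (if b < v.1.1 then
            (((v.1.1 + a : ℕ) : ℚ) * ((v.1.1 : ℕ) : ℚ)) •
              (X ((sh a ha v.1, v.2) : GDVar N c) *
                pderiv ((ush b hb v.1, v.2) : GDVar N c) p)
          else 0) = 0 := by
      intro v _ hv
      have hvb : v.1 ∉ (Fv p).image (sh b hb) := by
        intro hmem
        exact hv (Finset.mem_product.2 ⟨hmem, Finset.mem_univ _⟩)
      split_ifs with hlt
      · rw [pderiv_eq_zero_of_not_Fv, mul_zero, smul_zero]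
        intro hmem
        exact hvb (Finset.mem_image.2 ⟨ush b hb v.1, hmem, sh_ush hlt⟩)
      · rfl
    refine ((Finset.sum_subset (Finset.product_subset_product hsub (le_refl _)) hzero).symm).trans
      ?_
    rw [Finset.sum_product, Finset.sum_image (fun x _ y _ h => sh_injective b hb h),
      Finset.sum_product]
    refine Finset.sum_congr rfl fun j hj => Finset.sum_congr rfl fun α _ => ?_
    rw [if_pos (by rw [sh_val]; exact Nat.lt_add_of_pos_left j.2.1), DiagT, ush_sh, sh_val]
  · -- mixed part
    have hsub : Fv p ×ˢ (Finset.univ : Finset (Fin c))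
        ⊆ (Ubig a b ha hb p) ×ˢ (Finset.univ : Finset (Fin c)) :=
      Finset.product_subset_product (Fv_subset_Ubig a b ha hb p) (le_refl _)
    have hzero : ∀ v ∈ (Ubig a b ha hb p) ×ˢ (Finset.univ : Finset (Fin c)),
        v ∉ Fv p ×ˢ (Finset.univ : Finset (Fin c)) →
        ((v.1.1 + a : ℕ) : ℚ) •
            (X ((sh a ha v.1, v.2) : GDVar N c) * D b hb (pderiv v p)) = 0 := by
      intro v _ hv
      have hvp : v.1 ∉ Fv p := by
        intro hmem
        exact hv (Finset.mem_product.2 ⟨hmem, Finset.mem_univ _⟩)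
      obtain ⟨j, α⟩ := v
      rw [pderiv_eq_zero_of_not_Fv hvp, D_zero, mul_zero, smul_zero]
    refine ((Finset.sum_subset hsub hzero).symm).trans (Finset.sum_congr rfl fun v hv => ?_)
    have hT : ∀ w : GDVar N c, w.1 ∉ Fv p → pderiv w (pderiv v p) = 0 := by
      intro w hw
      obtain ⟨j, α⟩ := v
      rw [pderiv_pderiv_comm, pderiv_eq_zero_of_not_Fv hw, map_zero]
    rw [D_eq_sum b hb (pderiv v p) (Fv p) hT, Finset.mul_sum, Finset.smul_sum]
    refine Finset.sum_congr rfl fun w _ => ?_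
    rw [MixT, DtermV, smul_eq_C_mul, smul_eq_C_mul, smul_eq_C_mul, map_mul]
    ring

lemma Mix_symm :
    ∑ v ∈ Fv p ×ˢ (Finset.univ : Finset (Fin c)),
        ∑ w ∈ Fv p ×ˢ (Finset.univ : Finset (Fin c)), MixT a b ha hb p v w
      = ∑ v ∈ Fv p ×ˢ (Finset.univ : Finset (Fin c)),
          ∑ w ∈ Fv p ×ˢ (Finset.univ : Finset (Fin c)), MixT b a hb ha p v w := by
  rw [Finset.sum_comm]
  refine Finset.sum_congr rfl fun v _ => Finset.sum_congr rfl fun w _ => ?_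
  rw [MixT, MixT, pderiv_pderiv_comm, smul_eq_C_mul, smul_eq_C_mul, map_mul, map_mul]
  ring

lemma D_commutator :
    D a ha (D b hb p) - D b hb (D a ha p)
      = ((b : ℚ) - (a : ℚ)) • D (a + b) (Nat.dvd_add ha hb) p := by
  rw [D_D_eq a b ha hb p, D_D_eq b a hb ha p, Mix_symm a b ha hb p,
    D_eq_sum_Fv (a + b) (Nat.dvd_add ha hb) p, Finset.smul_sum]
  rw [add_sub_add_right_eq_sub, ← Finset.sum_sub_distrib]
  refine Finset.sum_congr rfl fun v _ => ?_
  have h1 : sh a ha (sh b hb v.1) = sh (a + b) (Nat.dvd_add ha hb) v.1 := by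
    refine Subtype.ext ?_
    rw [sh_val, sh_val, sh_val]
    omega
  have h2 : sh b hb (sh a ha v.1) = sh (a + b) (Nat.dvd_add ha hb) v.1 := by
    refine Subtype.ext ?_
    rw [sh_val, sh_val, sh_val]
    omega
  rw [DiagT, DiagT, DtermV, h1, h2]
  push_cast
  simp only [smul_eq_C_mul, map_mul, map_add, map_sub]
  ring

end DComm

section QPart

variable (a b : ℕ) (ha : N ∣ a) (hb : N ∣ b)

/-- The finite set of admissible indices below `m`. -/
noncomputable def RR (m : ℕ) : Finset (GDTimeIndex N) :=
  Finset.subtype (fun k => 0 < k ∧ ¬ N ∣ k) (Finset.range m)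

lemma mem_RR {m : ℕ} {k : GDTimeIndex N} : k ∈ RR (N := N) m ↔ k.1 < m := by
  rcases k with ⟨k, hk⟩
  simp [RR, Finset.mem_subtype]

lemma Qt_eq_zero {m : ℕ} {k s : GDTimeIndex N} (h : k.1 + s.1 ≠ m) :
    Qt (c := c) m k s = 0 :=
  Finset.sum_eq_zero fun _ _ => if_neg h

lemma Q_eq_sum (m : ℕ) :
    (Q m : MvPolynomial (GDVar N c) ℚ)
      = (1 / 2 : ℚ) • ∑ k ∈ RR (N := N) m, ∑ s ∈ RR (N := N) m, Qt m k s := by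
  rw [Q]
  congr 1
  have hinner : ∀ k : GDTimeIndex N,
      (∑ᶠ s : GDTimeIndex N, Qt (c := c) m k s) = ∑ s ∈ RR (N := N) m, Qt m k s := by
    intro k
    refine finsum_eq_sum_of_support_subset _ ?_
    intro s hs
    simp only [Function.mem_support, ne_eq] at hs
    rw [Finset.mem_coe, mem_RR]
    by_contra hlt
    exact hs (Qt_eq_zero (by have := k.2.1; omega))
  rw [finsum_congr hinner]
  refine finsum_eq_sum_of_support_subset _ ?_
  intro k hk
  simp only [Function.mem_support, ne_eq] at hk
  rw [Finset.mem_coe, mem_RR]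
  by_contra hlt
  exact hk (Finset.sum_eq_zero fun s _ => Qt_eq_zero (by have := s.2.1; omega))

/-- Delta helper term for differentiating `Qt`. -/
noncomputable def Fdel (m : ℕ) (j : GDTimeIndex N) (α : Fin c) (k s : GDTimeIndex N) :
    MvPolynomial (GDVar N c) ℚ :=
  ∑ α' : Fin c,
    if k.1 + s.1 = m then
      ((k.1 : ℚ) * (s.1 : ℚ)) •
        ((if ((k, α') : GDVar N c) = (j, α) then 1 else 0) * X ((s, α') : GDVar N c))
    else 0

lemma Fdel_eq_zero_of_ne {m : ℕ} {j : GDTimeIndex N} {α : Fin c} {k s : GDTimeIndex N}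
    (hk : k ≠ j) : Fdel m j α k s = 0 := by
  refine Finset.sum_eq_zero fun α' _ => ?_
  split_ifs with h1 h2
  · exact absurd (congrArg Prod.fst h2) hk
  · rw [zero_mul, smul_zero]
  · rfl

lemma Fdel_eq_zero_of_cond {m : ℕ} {j : GDTimeIndex N} {α : Fin c} {k s : GDTimeIndex N}
    (h : k.1 + s.1 ≠ m) : Fdel m j α k s = 0 :=
  Finset.sum_eq_zero fun _ _ => if_neg h

lemma pderiv_Qt (m : ℕ) (j k s : GDTimeIndex N) (α : Fin c) :
    pderiv ((j, α) : GDVar N c) (Qt m k s) = Fdel m j α k s + Fdel m j α s k := by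
  classical
  rw [Qt, map_sum, Fdel, Fdel, ← Finset.sum_add_distrib]
  refine Finset.sum_congr rfl fun α' _ => ?_
  by_cases h1 : k.1 + s.1 = m
  · rw [if_pos h1, if_pos h1, if_pos (show s.1 + k.1 = m by omega)]
    rw [Derivation.map_smul, pderiv_mul, pderiv_X, pderiv_X, Pi.single_apply, Pi.single_apply,
      smul_add]
    congr 1
    rw [smul_eq_C_mul, smul_eq_C_mul, map_mul, map_mul]
    ring
  · rw [if_neg h1, if_neg h1, if_neg (show ¬ (s.1 + k.1 = m) by omega), map_zero, add_zero]

lemma Fdel_sum_eq (m : ℕ) (hm : N ∣ m) (j : GDTimeIndex N) (α : Fin c) :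
    ∑ k ∈ RR (N := N) m, ∑ s ∈ RR (N := N) m, Fdel m j α k s
      = if j.1 < m then
          ((j.1 : ℚ) * (((m - j.1 : ℕ)) : ℚ)) • X ((cpl m hm j, α) : GDVar N c)
        else 0 := by
  classical
  by_cases hj : j.1 < m
  · rw [if_pos hj]
    rw [Finset.sum_eq_single_of_mem j (mem_RR.2 hj)
      (fun k _ hk => Finset.sum_eq_zero fun s _ => Fdel_eq_zero_of_ne hk)]
    rw [Finset.sum_eq_single_of_mem (cpl m hm j) (mem_RR.2 (cpl_lt hj))
      (fun s _ hs => Fdel_eq_zero_of_cond fun hc => hs (Subtype.ext (by rw [cpl_val hj]; omega)))]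
    rw [Fdel]
    rw [Finset.sum_eq_single_of_mem α (Finset.mem_univ α) (fun α' _ hα' => ?_)]
    · rw [if_pos (by rw [cpl_val hj]; omega), if_pos rfl, one_mul, cpl_val hj]
    · split_ifs with h1 h2
      · exact absurd (congrArg Prod.snd h2) hα'
      · rw [zero_mul, smul_zero]
      · rfl
  · rw [if_neg hj]
    refine Finset.sum_eq_zero fun k hk => Finset.sum_eq_zero fun s _ => ?_
    refine Fdel_eq_zero_of_ne fun hkj => ?_
    rw [mem_RR, hkj] at hk
    omega

lemma pderiv_Q (m : ℕ) (hm : N ∣ m) (j : GDTimeIndex N) (α : Fin c) :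
    pderiv ((j, α) : GDVar N c) (Q m)
      = if j.1 < m then
          ((j.1 : ℚ) * (((m - j.1 : ℕ)) : ℚ)) • X ((cpl m hm j, α) : GDVar N c)
        else 0 := by
  classical
  rw [Q_eq_sum, Derivation.map_smul, map_sum]
  rw [Finset.sum_congr rfl fun k (_ : k ∈ RR (N := N) m) => (map_sum
    (pderiv ((j, α) : GDVar N c)) (fun s => Qt (c := c) m k s) (RR (N := N) m))]
  rw [Finset.sum_congr rfl fun k _ => Finset.sum_congr rfl fun s _ => pderiv_Qt m j k s α]
  rw [Finset.sum_congr rfl fun k _ => Finset.sum_add_distrib, Finset.sum_add_distrib]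
  rw [Finset.sum_comm (s := RR (N := N) m) (t := RR (N := N) m)
    (f := fun k s => Fdel m j α s k)]
  rw [Fdel_sum_eq m hm j α, ← two_smul ℚ, smul_smul]
  norm_num


/-- Product of the two variables appearing in the quadratic part. -/
noncomputable def XXp (m : ℕ) (hm : N ∣ m) (K : GDTimeIndex N) (α : Fin c) :
    MvPolynomial (GDVar N c) ℚ :=
  X ((K, α) : GDVar N c) * X ((cpl m hm K, α) : GDVar N c)

include hb in
lemma D_Q_eq (m : ℕ) (hm : m = a + b) (hmd : N ∣ m) :
    D a ha (Q b)
      = ∑ K ∈ RR (N := N) m, ∑ α : Fin c,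
          if a < K.1 then
            ((K.1 : ℚ) * ((K.1 : ℚ) - (a : ℚ)) * ((m : ℚ) - (K.1 : ℚ))) • XXp m hmd K α
          else 0 := by
  classical
  have hT : ∀ v : GDVar N c, v.1 ∉ RR (N := N) b → pderiv v (Q b) = 0 := by
    intro v hv
    obtain ⟨j, β⟩ := v
    rw [pderiv_Q b hb j β, if_neg fun h => hv (mem_RR.2 h)]
  rw [D_eq_sum a ha (Q b) (RR (N := N) b) hT, Finset.sum_product]
  have hsub : (RR (N := N) b).image (sh a ha) ⊆ RR (N := N) m := by
    intro K hK
    obtain ⟨j, hj, rfl⟩ := Finset.mem_image.1 hK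
    rw [mem_RR, sh_val]
    have := mem_RR.1 hj
    omega
  have hzero : ∀ K ∈ RR (N := N) m, K ∉ (RR (N := N) b).image (sh a ha) →
      (∑ α : Fin c, if a < K.1 then
        ((K.1 : ℚ) * ((K.1 : ℚ) - (a : ℚ)) * ((m : ℚ) - (K.1 : ℚ))) • XXp m hmd K α
      else 0) = 0 := by
    intro K hK hKim
    refine Finset.sum_eq_zero fun α _ => if_neg fun hlt => hKim ?_
    refine Finset.mem_image.2 ⟨ush a ha K, ?_, sh_ush hlt⟩
    rw [mem_RR, ush_val hlt]
    have := mem_RR.1 hK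
    omega
  rw [← Finset.sum_subset hsub hzero]
  rw [Finset.sum_image (fun x _ y _ h => sh_injective a ha h)]
  refine Finset.sum_congr rfl fun j hj => Finset.sum_congr rfl fun α _ => ?_
  have hjb : j.1 < b := mem_RR.1 hj
  rw [DtermV, pderiv_Q b hb j α, if_pos hjb,
    if_pos (show a < (sh a ha j).1 by rw [sh_val]; omega)]
  have hcpl : cpl m hmd (sh a ha j) = cpl b hb j := by
    refine Subtype.ext ?_
    rw [cpl_val (by rw [sh_val]; omega), cpl_val hjb, sh_val]
    omega
  rw [XXp, hcpl, sh_val, Nat.cast_sub hjb.le]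
  rw [smul_eq_C_mul, smul_eq_C_mul, smul_eq_C_mul]
  push_cast [hm]
  simp only [map_mul, map_sub, map_add]
  ring

lemma Q_collapse (m : ℕ) (hm : N ∣ m) :
    (Q m : MvPolynomial (GDVar N c) ℚ)
      = (1 / 2 : ℚ) • ∑ K ∈ RR (N := N) m, ∑ α : Fin c,
          ((K.1 : ℚ) * ((m : ℚ) - (K.1 : ℚ))) • XXp m hm K α := by
  classical
  rw [Q_eq_sum]
  congr 1
  refine Finset.sum_congr rfl fun K hK => ?_
  have hKm : K.1 < m := mem_RR.1 hK
  rw [Finset.sum_eq_single_of_mem (cpl m hm K) (mem_RR.2 (cpl_lt hKm))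
    (fun s _ hs => Qt_eq_zero fun hc => hs (Subtype.ext (by rw [cpl_val hKm]; omega)))]
  rw [Qt]
  refine Finset.sum_congr rfl fun α _ => ?_
  rw [if_pos (by rw [cpl_val hKm]; omega), cpl_val hKm, Nat.cast_sub hKm.le, XXp]

lemma sum_cpl_reindex (m : ℕ) (hm : N ∣ m) (f : GDTimeIndex N → MvPolynomial (GDVar N c) ℚ) :
    ∑ K ∈ RR (N := N) m, f K = ∑ K ∈ RR (N := N) m, f (cpl m hm K) := by
  refine Finset.sum_bij' (fun K _ => cpl m hm K) (fun K _ => cpl m hm K) ?_ ?_ ?_ ?_ ?_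
  · intro K hK; exact mem_RR.2 (cpl_lt (mem_RR.1 hK))
  · intro K hK; exact mem_RR.2 (cpl_lt (mem_RR.1 hK))
  · intro K hK; exact cpl_cpl (mem_RR.1 hK)
  · intro K hK; exact cpl_cpl (mem_RR.1 hK)
  · intro K hK; rw [cpl_cpl (mem_RR.1 hK)]

lemma sum_eq_zero_of_cpl (m : ℕ) (hm : N ∣ m)
    (f : GDTimeIndex N → MvPolynomial (GDVar N c) ℚ)
    (h : ∀ K ∈ RR (N := N) m, f K + f (cpl m hm K) = 0) :
    ∑ K ∈ RR (N := N) m, f K = 0 := by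
  have h1 : ∑ K ∈ RR (N := N) m, f K = ∑ K ∈ RR (N := N) m, f (cpl m hm K) :=
    sum_cpl_reindex m hm f
  have h2 : (∑ K ∈ RR (N := N) m, f K) + ∑ K ∈ RR (N := N) m, f K = 0 := by
    nth_rewrite 2 [h1]
    rw [← Finset.sum_add_distrib]
    exact Finset.sum_eq_zero h
  exact add_self_eq_zero.1 h2

lemma Q_commutator :
    D a ha (Q b) - D b hb (Q a)
      = (((b : ℚ) - (a : ℚ))) • (Q (a + b) : MvPolynomial (GDVar N c) ℚ) := by
  classical
  have hab : N ∣ (a + b) := Nat.dvd_add ha hb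
  rw [D_Q_eq a b ha hb (a + b) rfl hab, D_Q_eq b a hb ha (a + b) (Nat.add_comm a b) hab,
    Q_collapse (a + b) hab, smul_smul, Finset.smul_sum]
  rw [← sub_eq_zero, ← Finset.sum_sub_distrib, ← Finset.sum_sub_distrib]
  refine sum_eq_zero_of_cpl (a + b) hab _ fun K hK => ?_
  have hK1 : K.1 < a + b := mem_RR.1 hK
  have hKa : K.1 ≠ a := fun h => K.2.2 (h ▸ ha)
  have hKb : K.1 ≠ b := fun h => K.2.2 (h ▸ hb)
  simp only [XXp, Finset.smul_sum, cpl_cpl hK1]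
  rw [← Finset.sum_sub_distrib, ← Finset.sum_sub_distrib, ← Finset.sum_sub_distrib,
    ← Finset.sum_sub_distrib, ← Finset.sum_add_distrib]
  refine Finset.sum_eq_zero fun α _ => ?_
  rw [cpl_val hK1, Nat.cast_sub hK1.le]
  push_cast
  rw [mul_comm (X ((cpl (a + b) hab K, α) : GDVar N c)) (X ((K, α) : GDVar N c))]
  rcases hKa.lt_or_gt with h1 | h1 <;> rcases hKb.lt_or_gt with h2 | h2 <;>
    split_ifs <;> first | module | (exfalso; omega)

end QPart

end GDProof


theorem virasoro_commutation_GD (N c : ℕ) (hN : 2 ≤ N) (hc : 1 ≤ c)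
    (a b : ℕ) (hapos : 0 < a) (ha : N ∣ a) (hbpos : 0 < b) (hb : N ∣ b)
    (p : MvPolynomial (GDVar N c) ℚ) :
    virasoroOpGD N c a ha (virasoroOpGD N c b hb p)
        - virasoroOpGD N c b hb (virasoroOpGD N c a ha p)
      = ((b : ℚ) - (a : ℚ)) • virasoroOpGD N c (a + b) (Nat.dvd_add ha hb) p := by
  have hab : N ∣ (a + b) := Nat.dvd_add ha hb
  simp only [GDProof.virasoro_eq]
  simp only [GDProof.D_add, GDProof.D_mul]
  have h1 := GDProof.D_commutator a b ha hb p
  have h2 := GDProof.Q_commutator (c := c) a b ha hb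
  simp only [smul_eq_C_mul] at h1 h2 ⊢
  linear_combination h1 + h2 * p
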